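/- arXiv:2509.02889 — 8 statements merged into one kernel-verified Lean document; each statement's English description precedes it below -/
import Mathlib

section
/- Let K be a field with a Hausdorff field topology τ, and let I be a set of derivations K → K. Equip K × K^I with the product topology induced by τ and let σ_I : K → K × K^I be given by σ_I(a) = (a, (d(a))_{d ∈ I}). Then the topology τ_I induced on K by σ_I (i.e., the coarsest topology making σ_I continuous) is a field topology: addition, negation, multiplication are continuous, and multiplicative inverse is continuous on K \ {0}. -/
open TopologicalSpace Polynomial

variable {K : Type*}

/-- The topology on `K` induced by the embedding `a ↦ (a, (d a)_{d ∈ I})` into `K × K^I`,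
where `K × K^I` carries the product topology induced by `τ`. -/
def derTop [Field K] (τ : TopologicalSpace K) (I : Set (Derivation ℤ K K)) :
    TopologicalSpace K :=
  @TopologicalSpace.induced K (K × (I → K)) (fun a => (a, fun d => d.1 a))
    (@instTopologicalSpaceProd K (I → K) τ (@Pi.topologicalSpace I (fun _ => K) fun _ => τ))

/-- `τ` is a (Hausdorff) field topology on `K`. -/
def IsFieldTopology [Field K] (τ : TopologicalSpace K) : Prop :=
  @T2Space K τ ∧ @IsTopologicalRing K τ _ ∧
    @ContinuousOn K K τ τ (fun x => x⁻¹) {0}ᶜ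

/-- Type synonym for `K` carrying the topology `derTop τ I`. -/
def DerTopType {K : Type*} [Field K] (τ : TopologicalSpace K)
    (I : Set (Derivation ℤ K K)) : Type _ := K

namespace DerTopType

variable {K : Type*} [Field K] (τ : TopologicalSpace K) (I : Set (Derivation ℤ K K))

instance : Field (DerTopType τ I) := ‹Field K›

instance : TopologicalSpace (DerTopType τ I) := derTop τ I

variable {τ I}

/-- The identity map `DerTopType τ I → K`. -/
def toK : DerTopType τ I → K := fun a => a

@[simp] lemma toK_mul (a b : DerTopType τ I) : toK (a * b) = toK a * toK b := rfl
@[simp] lemma toK_inv (a : DerTopType τ I) : toK a⁻¹ = (toK a)⁻¹ := rfl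

/-- The map `a ↦ (a, (d a)_d)` as a ring hom into the trivial square-zero extension. -/
def σHom : DerTopType τ I →+* TrivSqZeroExt K (I → K) where
  toFun a := ⟨toK a, fun d => d.1 (toK a)⟩
  map_one' := TrivSqZeroExt.ext rfl (funext fun d => by
    show d.1 ((1 : K)) = 0
    simp)
  map_mul' a b := TrivSqZeroExt.ext rfl (funext fun d => by
    show d.1 (toK a * toK b) = _
    show d.1 (toK a * toK b) =
      toK a • (fun d : I => d.1 (toK b)) d
        + (MulOpposite.op (toK b) • fun d : I => d.1 (toK a)) d
    simp [Derivation.leibniz, smul_eq_mul, MulOpposite.smul_eq_mul_unop]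
    ring)
  map_zero' := TrivSqZeroExt.ext rfl (funext fun d => by
    show d.1 ((0 : K)) = 0
    simp)
  map_add' a b := TrivSqZeroExt.ext rfl (funext fun d => by
    show d.1 (toK a + toK b) = _
    show d.1 (toK a + toK b) =
      (fun d : I => d.1 (toK a)) d + (fun d : I => d.1 (toK b)) d
    simp)

lemma isInducing_σHom : Topology.IsInducing (σHom : DerTopType τ I → TrivSqZeroExt K (I → K)) :=
  ⟨by rfl⟩

variable [IsTopologicalRing K]

lemma continuousSMul_op : ContinuousSMul Kᵐᵒᵖ K := by
  refine ⟨?_⟩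
  have : (fun p : Kᵐᵒᵖ × K => p.1 • p.2) = fun p : Kᵐᵒᵖ × K => p.2 * p.1.unop := rfl
  rw [this]
  exact continuous_snd.mul (MulOpposite.continuous_unop.comp continuous_fst)

lemma topologicalRing : IsTopologicalRing (DerTopType τ I) := by
  haveI : ContinuousSMul Kᵐᵒᵖ K := continuousSMul_op
  haveI : ContinuousSMul Kᵐᵒᵖ (I → K) := inferInstance
  haveI : IsTopologicalRing (TrivSqZeroExt K (I → K)) := inferInstance
  haveI : ContinuousAdd (DerTopType τ I) := isInducing_σHom.continuousAdd σHom
  haveI : ContinuousMul (DerTopType τ I) := isInducing_σHom.continuousMul σHom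
  haveI : ContinuousNeg (DerTopType τ I) :=
    isInducing_σHom.continuousNeg (fun x => map_neg σHom x)
  exact { }

lemma continuousOn_inv (hinv : @ContinuousOn K K _ _ (fun x => x⁻¹) {0}ᶜ) :
    ContinuousOn (fun x : DerTopType τ I => x⁻¹) {0}ᶜ := by
  haveI : ContinuousSMul Kᵐᵒᵖ K := continuousSMul_op
  haveI : ContinuousSMul Kᵐᵒᵖ (I → K) := inferInstance
  rw [isInducing_σHom.continuousOn_iff]
  have htoK : Continuous (toK : DerTopType τ I → K) :=
    TrivSqZeroExt.continuous_fst.comp isInducing_σHom.continuous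
  have hmaps : Set.MapsTo (toK : DerTopType τ I → K) {0}ᶜ {0}ᶜ := fun x hx => hx
  have hIon : ContinuousOn (fun x : DerTopType τ I => (toK x)⁻¹) {0}ᶜ :=
    hinv.comp htoK.continuousOn hmaps
  have hd : ∀ d : I, Continuous (fun x : DerTopType τ I => d.1 (toK x)) := fun d =>
    by exact (continuous_apply d).comp (TrivSqZeroExt.continuous_snd.comp isInducing_σHom.continuous)
  apply ContinuousOn.prodMk
  · exact hIon
  · apply continuousOn_pi.2
    intro d
    have hkey : (fun x : DerTopType τ I => d.1 (toK x⁻¹)) =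
        fun x : DerTopType τ I => -((toK x)⁻¹ * (toK x)⁻¹ * d.1 (toK x)) := by
      funext x
      rw [toK_inv, Derivation.leibniz_inv, smul_eq_mul]
      ring
    exact hkey ▸ ((hIon.mul hIon).mul (hd d).continuousOn).neg

end DerTopType

theorem stmt0 [Field K] (τ : TopologicalSpace K) (hτ : IsFieldTopology τ)
    (I : Set (Derivation ℤ K K)) :
    @IsTopologicalRing K (derTop τ I) _ ∧
      @ContinuousOn K K (derTop τ I) (derTop τ I) (fun x => x⁻¹) {0}ᶜ := by
  obtain ⟨-, hring, hinv⟩ := hτ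
  letI := τ
  haveI := hring
  exact ⟨DerTopType.topologicalRing (τ := τ) (I := I),
    DerTopType.continuousOn_inv (τ := τ) (I := I) hinv⟩
end

section
/- With K, τ, I as above, τ_I is discrete if and only if there exist a τ-neighborhood U of 0 and finitely many derivations d₁, …, dₙ ∈ I such that U ∩ d₁⁻¹(U) ∩ ⋯ ∩ dₙ⁻¹(U) = {0}. -/
open TopologicalSpace Polynomial

variable {K : Type*}

theorem stmt2 [Field K] (τ : TopologicalSpace K) (hτ : IsFieldTopology τ)
    (I : Set (Derivation ℤ K K)) :
    derTop τ I = ⊥ ↔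
      ∃ U ∈ @nhds K τ 0, ∃ s : Finset (Derivation ℤ K K), ↑s ⊆ I ∧
        {a : K | a ∈ U ∧ ∀ d ∈ s, d a ∈ U} = {0} := by
  classical
  obtain ⟨_, hring, -⟩ := hτ
  letI := τ
  haveI : IsTopologicalAddGroup K := @IsTopologicalRing.to_topologicalAddGroup K _ _ hring
  set f : K → K × (I → K) := fun a => (a, fun d => d.1 a) with hf
  let φ : K →+ K × (I → K) :=
    { toFun := f
      map_zero' := by ext <;> simp [hf]
      map_add' := by intro a b; ext <;> simp [hf] }
  have hφf : ⇑φ = f := rfl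
  -- the discrete characterization
  have hdisc : derTop τ I = ⊥ ↔ @IsOpen K (derTop τ I) {0} := by
    constructor
    · intro h
      rw [h]
      exact @isOpen_discrete K ⊥ (discreteTopology_bot K) {0}
    · intro h
      haveI hg : @IsTopologicalAddGroup K (derTop τ I) _ := by
        have := topologicalAddGroup_induced (G := K × (I → K)) (H := K) φ
        rw [hφf] at this
        exact this
      haveI : @DiscreteTopology K (derTop τ I) :=
        (@discreteTopology_iff_isOpen_singleton_zero K (derTop τ I) _ inferInstance).2 h
      exact @DiscreteTopology.eq_bot K (derTop τ I) this
  rw [hdisc]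
  have hopen : @IsOpen K (derTop τ I) {0} ↔ ∃ W, IsOpen W ∧ f ⁻¹' W = {0} :=
    @isOpen_induced_iff K (K × (I → K)) _ {0} f
  rw [hopen]
  constructor
  · rintro ⟨W, hW, hfW⟩
    have hf0 : f 0 = ((0 : K), fun _ => (0 : K)) := by ext <;> simp [hf]
    have h0W : f 0 ∈ W := by
      rw [← Set.mem_preimage, hfW]; rfl
    have hWn : W ∈ nhds ((0 : K), fun _ => (0 : K)) := hW.mem_nhds (hf0 ▸ h0W)
    rw [mem_nhds_prod_iff] at hWn
    obtain ⟨U, hU, V, hV, hUV⟩ := hWn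
    rw [nhds_pi, Filter.mem_pi] at hV
    obtain ⟨J, hJfin, V', hV', hV'V⟩ := hV
    refine ⟨U ∩ ⋂ d ∈ hJfin.toFinset, V' d, ?_,
      hJfin.toFinset.image Subtype.val, ?_, ?_⟩
    · exact Filter.inter_mem hU (Filter.biInter_finset_mem _ |>.2 fun d _ => hV' d)
    · intro d hd
      simp only [Finset.coe_image, Set.mem_image] at hd
      obtain ⟨e, -, rfl⟩ := hd
      exact e.2
    · rw [Set.eq_singleton_iff_unique_mem]
      have h0 : (0 : K) ∈ U ∩ ⋂ d ∈ hJfin.toFinset, V' d := by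
        refine ⟨mem_of_mem_nhds hU, ?_⟩
        simp only [Set.mem_iInter]
        intro d _
        exact mem_of_mem_nhds (hV' d)
      refine ⟨⟨h0, fun d _ => by simpa using h0⟩, ?_⟩
      rintro a ⟨⟨haU, haV⟩, hd⟩
      have hfa : f a ∈ W := by
        apply hUV
        refine ⟨haU, hV'V fun d hdJ => ?_⟩
        have hds : d.1 ∈ hJfin.toFinset.image Subtype.val :=
          Finset.mem_image.2 ⟨d, hJfin.mem_toFinset.2 hdJ, rfl⟩
        have := (hd d.1 hds).2
        simp only [Set.mem_iInter] at this
        exact this d (hJfin.mem_toFinset.2 hdJ)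
      have : a ∈ f ⁻¹' W := hfa
      rwa [hfW, Set.mem_singleton_iff] at this
  · rintro ⟨U, hU, s, hsI, hset⟩
    obtain ⟨U₀, hU₀U, hU₀open, h0U₀⟩ := mem_nhds_iff.1 hU
    let J : Set I := Subtype.val ⁻¹' (s : Set (Derivation ℤ K K))
    have hJfin : J.Finite := s.finite_toSet.preimage Subtype.val_injective.injOn
    refine ⟨U₀ ×ˢ J.pi fun _ => U₀,
      hU₀open.prod (isOpen_set_pi hJfin fun _ _ => hU₀open), ?_⟩
    ext a
    simp only [Set.mem_preimage, hf, Set.mem_prod, Set.mem_pi, Set.mem_singleton_iff]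
    constructor
    · rintro ⟨ha, hd⟩
      have : a ∈ ({a : K | a ∈ U ∧ ∀ d ∈ s, d a ∈ U} : Set K) := by
        refine ⟨hU₀U ha, fun d hds => ?_⟩
        exact hU₀U (hd ⟨d, hsI hds⟩ hds)
      rwa [hset, Set.mem_singleton_iff] at this
    · rintro rfl
      exact ⟨h0U₀, fun d _ => by simpa using h0U₀⟩
end

section
/- Let K be a field with a Hausdorff field topology τ and let d : K → K be a derivation. If τ is locally bounded and the topology τ_d (induced by a ↦ (a, d(a)) into K × K with the product τ-topology) is not discrete, then τ_d is locally bounded. -/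
open TopologicalSpace Polynomial

variable {K : Type*}

/-- `s` is a bounded subset of `K` with respect to the field topology `τ`. -/
def IsBddSet [Field K] (τ : TopologicalSpace K) (s : Set K) : Prop :=
  ∀ U ∈ @nhds K τ 0, ∃ l : K, l ≠ 0 ∧ ∀ x ∈ s, l * x ∈ U

/-- `τ` is locally bounded: some nonempty open set is bounded. -/
def IsLocallyBoundedTop [Field K] (τ : TopologicalSpace K) : Prop :=
  ∃ U : Set K, @IsOpen K τ U ∧ U.Nonempty ∧ IsBddSet τ U

lemma derTop_eq [Field K] (τ : TopologicalSpace K) (d : Derivation ℤ K K) :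
    derTop τ {d} = τ ⊓ τ.induced ⇑d := by
  unfold derTop
  rw [show (@instTopologicalSpaceProd K (({d}:Set (Derivation ℤ K K)) → K) τ
      (@Pi.topologicalSpace _ (fun _ => K) fun _ => τ)) =
      (TopologicalSpace.induced Prod.fst τ ⊓ TopologicalSpace.induced Prod.snd
        (@Pi.topologicalSpace _ (fun _ => K) fun _ => τ)) from rfl,
    induced_inf, induced_compose]
  congr 1
  · exact induced_id
  · rw [Pi.topologicalSpace, induced_iInf, induced_iInf]
    simp only [induced_compose]
    haveI : Nonempty ({d} : Set (Derivation ℤ K K)) := ⟨⟨d, rfl⟩⟩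
    have h : ∀ i : ({d} : Set (Derivation ℤ K K)),
        TopologicalSpace.induced
          ((fun f : ({d} : Set (Derivation ℤ K K)) → K => f i) ∘ Prod.snd ∘
            (fun a : K => (a, fun d' : ({d} : Set (Derivation ℤ K K)) => d'.1 a))) τ
        = TopologicalSpace.induced (⇑d) τ := by
      rintro ⟨i, hi⟩
      obtain rfl : i = d := hi
      rfl
    calc (⨅ i : ({d} : Set (Derivation ℤ K K)), TopologicalSpace.induced
          ((fun f : ({d} : Set (Derivation ℤ K K)) → K => f i) ∘ Prod.snd ∘
            (fun a : K => (a, fun d' : ({d} : Set (Derivation ℤ K K)) => d'.1 a))) τ)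
        = ⨅ _ : ({d} : Set (Derivation ℤ K K)), TopologicalSpace.induced (⇑d) τ :=
          iInf_congr h
      _ = TopologicalSpace.induced (⇑d) τ := iInf_const

theorem stmt3 [Field K] (τ : TopologicalSpace K) (hτ : IsFieldTopology τ)
    (hlb : IsLocallyBoundedTop τ) (d : Derivation ℤ K K)
    (hnd : derTop τ {d} ≠ ⊥) :
    IsLocallyBoundedTop (derTop τ {d}) := by
  obtain ⟨hT2, hRing, hInv⟩ := hτ
  letI := τ
  haveI := hRing
  rw [derTop_eq τ d] at hnd ⊢
  have hle1 : (τ ⊓ TopologicalSpace.induced (⇑d) τ) ≤ τ := inf_le_left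
  have hle2 : (τ ⊓ TopologicalSpace.induced (⇑d) τ) ≤ TopologicalSpace.induced (⇑d) τ :=
    inf_le_right
  -- binary continuity helpers
  have half : ∀ f : K → K → K, Continuous (fun p : K × K => f p.1 p.2) → f 0 0 = 0 →
      ∀ W ∈ nhds (0:K), ∃ W₁ ∈ nhds (0:K), ∃ W₂ ∈ nhds (0:K),
        ∀ x ∈ W₁, ∀ y ∈ W₂, f x y ∈ W := by
    intro f hf hf0 W hW
    have h : Filter.Tendsto (fun p : K × K => f p.1 p.2) (nhds (0,0)) (nhds 0) := by
      have := hf.tendsto ((0:K),(0:K)); rwa [hf0] at this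
    have h2 := h hW
    rw [nhds_prod_eq, Filter.mem_map, Filter.mem_prod_iff] at h2
    obtain ⟨W₁, h₁, W₂, h₂, hsub⟩ := h2
    exact ⟨W₁, h₁, W₂, h₂, fun x hx y hy => hsub (Set.mk_mem_prod hx hy)⟩
  have halfadd := half (fun x y => x + y) (by continuity) (by simp)
  have halfsub := half (fun x y => x - y) (by continuity) (by simp)
  have halfmul := half (fun x y => x * y) (by continuity) (by simp)
  -- bounded open neighborhood B of 0
  obtain ⟨U, hUopen, ⟨u₀, hu₀⟩, hUbdd⟩ := hlb
  set B : Set K := (fun x : K => x + u₀) ⁻¹' U with hBdef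
  have hBopen : IsOpen B := hUopen.preimage (continuous_id.add continuous_const)
  have hB0 : (0:K) ∈ B := by simp [hBdef, hu₀]
  have hBnhds : B ∈ nhds (0:K) := hBopen.mem_nhds hB0
  have hBbdd : ∀ W ∈ nhds (0:K), ∃ l : K, l ≠ 0 ∧ ∀ x ∈ B, l * x ∈ W := by
    intro W hW
    obtain ⟨W₁, h₁, W₂, h₂, hsub⟩ := halfsub W hW
    obtain ⟨l, hl0, hlU⟩ := hUbdd (W₁ ∩ W₂) (Filter.inter_mem h₁ h₂)
    refine ⟨l, hl0, fun x hx => ?_⟩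
    have he : l * x = l * (x + u₀) - l * u₀ := by ring
    rw [he]
    exact hsub _ (hlU _ hx).1 _ (hlU _ hu₀).2
  -- absorbing constant for B*B
  obtain ⟨k, hk0, hk⟩ : ∃ kk : K, kk ≠ 0 ∧ ∀ c ∈ B, ∀ x ∈ B, kk * (c * x) ∈ B := by
    obtain ⟨W₁, h₁, W₂, h₂, hmul⟩ := halfmul B hBnhds
    obtain ⟨l₁, hl₁, hBW₁⟩ := hBbdd W₁ h₁
    obtain ⟨l₂, hl₂, hBW₂⟩ := hBbdd W₂ h₂
    refine ⟨l₁ * l₂, mul_ne_zero hl₁ hl₂, fun c hc x hx => ?_⟩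
    have he : (l₁*l₂) * (c*x) = (l₁*c) * (l₂*x) := by ring
    rw [he]
    exact hmul _ (hBW₁ c hc) _ (hBW₂ x hx)
  -- Lemma A : multipliers of B form sets containing m·B
  have lemA : ∀ W ∈ nhds (0:K), ∃ m : K, m ≠ 0 ∧ ∀ c ∈ B, ∀ x ∈ B, (m * c) * x ∈ W := by
    intro W hW
    obtain ⟨l, hl0, hlB⟩ := hBbdd W hW
    refine ⟨l * k, mul_ne_zero hl0 hk0, fun c hc x hx => ?_⟩
    have he : (l*k*c)*x = l * (k * (c*x)) := by ring
    rw [he]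
    exact hlB _ (hk c hc x hx)
  -- nondiscreteness: nonzero points in every (P, Q)-neighborhood
  have hnz : ∀ P ∈ nhds (0:K), ∀ Q ∈ nhds (0:K),
      ∃ l : K, l ≠ 0 ∧ l ∈ P ∧ d l ∈ Q := by
    intro P hP Q hQ
    by_contra hcon
    push_neg at hcon
    obtain ⟨P', hP'sub, hP'open, hP'0⟩ := mem_nhds_iff.mp hP
    obtain ⟨Q', hQ'sub, hQ'open, hQ'0⟩ := mem_nhds_iff.mp hQ
    apply hnd
    apply eq_bot_of_singletons_open
    intro a
    have hEq : ({a} : Set K) =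
        ((fun x : K => x - a) ⁻¹' P') ∩ ⇑d ⁻¹' ((fun y : K => y - d a) ⁻¹' Q') := by
      ext x
      simp only [Set.mem_singleton_iff, Set.mem_inter_iff, Set.mem_preimage]
      constructor
      · rintro rfl; simpa using ⟨hP'0, hQ'0⟩
      · rintro ⟨h1, h2⟩
        by_contra hxa
        have hx0 : x - a ≠ 0 := sub_ne_zero.mpr hxa
        have hd : d (x - a) = d x - d a := map_sub d x a
        exact hcon (x - a) hx0 (hP'sub h1) (hd ▸ hQ'sub h2)
    rw [hEq]
    exact @IsOpen.inter K (τ ⊓ TopologicalSpace.induced (⇑d) τ) _ _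
      (IsOpen.mono (hP'open.preimage (continuous_id.sub continuous_const)) hle1)
      (IsOpen.mono
        (isOpen_induced (hQ'open.preimage (continuous_id.sub continuous_const)))
        hle2)
  -- the candidate open bounded set
  refine ⟨B ∩ ⇑d ⁻¹' B, ?_, ⟨0, hB0, by
      simp only [Set.mem_preimage, map_zero]; exact hB0⟩, ?_⟩
  · exact @IsOpen.inter K (τ ⊓ TopologicalSpace.induced (⇑d) τ) _ _
      (hBopen.mono hle1) ((isOpen_induced hBopen).mono hle2)
  · intro U' hU'
    rw [@nhds_inf K τ (τ.induced ⇑d) 0, Filter.mem_inf_iff] at hU'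
    obtain ⟨V, hV, T, hT, rfl⟩ := hU'
    rw [nhds_induced] at hT
    rw [map_zero] at hT
    obtain ⟨W, hW, hWT⟩ := hT
    obtain ⟨W₁, hW₁, W₂, hW₂, hadd⟩ := halfadd W hW
    obtain ⟨m₁, hm₁, hA₁⟩ := lemA (V ∩ W₁) (Filter.inter_mem hV hW₁)
    obtain ⟨m₂, hm₂, hA₂⟩ := lemA W₂ hW₂
    have hPn : (fun x : K => m₁⁻¹ * x) ⁻¹' B ∈ nhds (0:K) := by
      apply (continuous_const.mul continuous_id).continuousAt.preimage_mem_nhds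
      simpa using hBnhds
    have hQn : (fun x : K => m₂⁻¹ * x) ⁻¹' B ∈ nhds (0:K) := by
      apply (continuous_const.mul continuous_id).continuousAt.preimage_mem_nhds
      simpa using hBnhds
    obtain ⟨l, hl0, hlP, hlQ⟩ := hnz _ hPn _ hQn
    have hc₁ : m₁⁻¹ * l ∈ B := hlP
    have hc₂ : m₂⁻¹ * d l ∈ B := hlQ
    refine ⟨l, hl0, ?_⟩
    rintro a ⟨haB, hdaB⟩
    have key₁ : ∀ x ∈ B, l * x ∈ V ∩ W₁ := by
      intro x hx
      have he : l * x = (m₁ * (m₁⁻¹ * l)) * x := by field_simp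
      rw [he]
      exact hA₁ _ hc₁ x hx
    have key₂ : d l * a ∈ W₂ := by
      have he : d l * a = (m₂ * (m₂⁻¹ * d l)) * a := by field_simp
      rw [he]
      exact hA₂ _ hc₂ a haB
    constructor
    · exact (key₁ a haB).1
    · apply hWT
      show d (l * a) ∈ W
      have hleib : d (l * a) = l * d a + d l * a := by
        rw [d.leibniz]; simp [smul_eq_mul]; ring
      rw [hleib]
      exact hadd _ (key₁ (d a) hdaB).2 _ key₂
end

section
/- Let K be a field with a Hausdorff field topology τ and let d₁, …, dₙ : K → K be K-linearly independent derivations such that the intersection F = ⋂ᵢ Cons(dᵢ) of their constant subfields is τ-dense in K. Then the set {(a, d₁(a), …, dₙ(a)) : a ∈ K} is τ-dense in K^{n+1} (with the product topology). -/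
open TopologicalSpace Polynomial

variable {K : Type*}

theorem stmt6 [Field K] (τ : TopologicalSpace K) (hτ : IsFieldTopology τ)
    (n : ℕ) (d : Fin n → Derivation ℤ K K)
    (hli : LinearIndependent K fun i => ⇑(d i))
    (hdense : @Dense K τ {a : K | ∀ i, d i a = 0}) :
    @Dense (K × (Fin n → K))
      (@instTopologicalSpaceProd K (Fin n → K) τ
        (@Pi.topologicalSpace (Fin n) (fun _ => K) fun _ => τ))
      (Set.range fun a : K => (a, fun i => d i a)) := by
  letI := τ
  haveI : IsTopologicalRing K := hτ.2.1
  set Φ : K → K × (Fin n → K) := fun a => (a, fun i => d i a) with hΦ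
  set S : Set (K × (Fin n → K)) := Set.range Φ with hS
  -- Step 1: span of derivation-value vectors is ⊤
  have spanv : Submodule.span K (Set.range fun a : K => (fun i => d i a : Fin n → K)) = ⊤ := by
    by_contra h
    obtain ⟨φ, hφne, hφ⟩ :=
      Submodule.exists_dual_map_eq_bot_of_lt_top (lt_top_iff_ne_top.mpr h) inferInstance
    have hker : ∀ a : K, φ (fun i => d i a) = 0 := by
      intro a
      have : (fun i => d i a) ∈ Submodule.span K
          (Set.range fun a : K => (fun i => d i a : Fin n → K)) :=
        Submodule.subset_span ⟨a, rfl⟩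
      have := Submodule.mem_map_of_mem (f := φ) this
      rw [hφ] at this
      simpa using this
    -- express φ in coordinates
    have hrep : ∀ v : Fin n → K, φ v = ∑ i, v i * φ (Pi.single i 1) := by
      intro v
      have hv : v = ∑ i, v i • (Pi.single i (1 : K) : Fin n → K) := by
        funext j; simp [Pi.single_apply]
      conv_lhs => rw [hv]
      rw [map_sum]
      exact Finset.sum_congr rfl fun i _ => by rw [map_smul, smul_eq_mul]
    have hg : ∀ i, φ (Pi.single i 1) = 0 := by
      have := Fintype.linearIndependent_iff.mp hli (fun i => φ (Pi.single i 1))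
      refine this ?_
      funext a
      have := hker a
      rw [hrep] at this
      simpa [mul_comm] using this
    apply hφne
    apply LinearMap.ext
    intro v
    rw [hrep]
    simp [hg]
  -- Step 2: span of S is ⊤
  have hΦ1 : Φ 1 = (1, 0) := by
    simp [hΦ]
    funext i
    simp
  have spanS : Submodule.span K S = ⊤ := by
    rw [eq_top_iff]
    rintro ⟨b, c⟩ -
    have hc : c ∈ Submodule.span K (Set.range fun a : K => (fun i => d i a : Fin n → K)) := by
      rw [spanv]; trivial
    have key : ∀ c ∈ Submodule.span K (Set.range fun a : K => (fun i => d i a : Fin n → K)),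
        ∃ s : K, (s, c) ∈ Submodule.span K S := by
      intro c hc
      induction hc using Submodule.span_induction with
      | mem x hx =>
        obtain ⟨a, rfl⟩ := hx
        exact ⟨a, Submodule.subset_span ⟨a, rfl⟩⟩
      | zero => exact ⟨0, Submodule.zero_mem _⟩
      | add x y _ _ hx hy =>
        obtain ⟨s, hs⟩ := hx; obtain ⟨t, ht⟩ := hy
        exact ⟨s + t, by simpa [Prod.mk_add_mk] using Submodule.add_mem _ hs ht⟩
      | smul μ x _ hx =>
        obtain ⟨s, hs⟩ := hx
        exact ⟨μ * s, by simpa [Prod.smul_mk] using Submodule.smul_mem _ μ hs⟩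
    obtain ⟨s, hs⟩ := key c hc
    have h1 : ((1 : K), (0 : Fin n → K)) ∈ Submodule.span K S := by
      apply Submodule.subset_span
      exact ⟨1, hΦ1⟩
    have := Submodule.add_mem _ hs (Submodule.smul_mem _ (b - s) h1)
    simpa [Prod.smul_mk, Prod.mk_add_mk] using this
  -- Step 3: closure of S contains K • S
  have hsmul : ∀ (μ : K) (w : K × (Fin n → K)), w ∈ closure S → μ • w ∈ closure S := by
    have hstep : ∀ (μ : K) (a : K), μ • Φ a ∈ closure S := by
      intro μ a
      have hcont : Continuous (fun l : K => l • Φ a) :=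
        continuous_id.smul continuous_const
      have himg : (fun l : K => l • Φ a) '' {x : K | ∀ i, d i x = 0} ⊆ S := by
        rintro _ ⟨l, hl, rfl⟩
        refine ⟨l * a, ?_⟩
        simp only [hΦ, Prod.smul_mk]
        refine Prod.ext rfl ?_
        funext i
        have : d i (l * a) = l * d i a + a * d i l := by
          simpa [smul_eq_mul] using (d i).leibniz l a
        simp [this, hl i, smul_eq_mul]
      have hμ : μ ∈ closure {x : K | ∀ i, d i x = 0} := hdense μ
      have := (image_closure_subset_closure_image hcont) ⟨μ, hμ, rfl⟩
      exact closure_mono himg this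
    intro μ w hw
    have hcont : Continuous (fun v : K × (Fin n → K) => μ • v) :=
      continuous_const_smul μ
    have : (fun v : K × (Fin n → K) => μ • v) '' S ⊆ closure S := by
      rintro _ ⟨_, ⟨a, rfl⟩, rfl⟩
      exact hstep μ a
    have h2 := (image_closure_subset_closure_image hcont) ⟨w, hw, rfl⟩
    exact closure_minimal this isClosed_closure h2
  -- Step 4: closure of S is an additive subgroup containing span = ⊤
  let Φ' : K →+ K × (Fin n → K) :=
    { toFun := Φ
      map_zero' := by refine Prod.ext rfl ?_; funext i; simp [hΦ]
      map_add' := by intro a b; refine Prod.ext rfl ?_; funext i; simp [hΦ] }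
  have hrange : (Φ'.range : Set (K × (Fin n → K))) = S := by
    ext x; exact ⟨fun ⟨a, ha⟩ => ⟨a, ha⟩, fun ⟨a, ha⟩ => ⟨a, ha⟩⟩
  have hcl : ∀ x : K × (Fin n → K), x ∈ Φ'.range.topologicalClosure ↔ x ∈ closure S := by
    intro x
    rw [← SetLike.mem_coe, AddSubgroup.topologicalClosure_coe, hrange]
  rw [dense_iff_closure_eq, Set.eq_univ_iff_forall]
  intro w
  have hw : w ∈ Submodule.span K S := by rw [spanS]; trivial
  clear hτ
  induction hw using Submodule.span_induction with
  | mem x hx => exact subset_closure hx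
  | zero => exact (hcl 0).mp (zero_mem _)
  | add x y _ _ hx hy => exact (hcl _).mp (add_mem ((hcl _).mpr hx) ((hcl _).mpr hy))
  | smul μ x _ hx => exact hsmul μ x hx
end

section
/- Let K be a field with a Hausdorff field topology τ, and suppose U is a nonempty bounded open subset of K. Then the collection {aU + b : a ∈ K×, b ∈ K} is a basis for τ. -/
open TopologicalSpace Polynomial Filter Topology

variable {K : Type*}

theorem stmt10 [Field K] (τ : TopologicalSpace K) (hτ : IsFieldTopology τ)
    (U : Set K) (hUo : @IsOpen K τ U) (hUne : U.Nonempty) (hUb : IsBddSet τ U) :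
    @TopologicalSpace.IsTopologicalBasis K τ
      {S : Set K | ∃ a b : K, a ≠ 0 ∧ S = (fun x => a * x + b) '' U} := by
  letI := τ
  obtain ⟨ht2, hring, hinv⟩ := hτ
  refine isTopologicalBasis_of_isOpen_of_nhds ?_ ?_
  · rintro S ⟨a, b, ha, rfl⟩
    have : (fun x => a * x + b) '' U =
        ((Homeomorph.mulLeft₀ a ha).trans (Homeomorph.addRight b)) '' U := rfl
    rw [this]
    exact (Homeomorph.isOpenMap _) U hUo
  · intro x V hxV hVo
    obtain ⟨u₀, hu₀⟩ := hUne
    -- find a neighborhood W of 0 with x + (y - z) ∈ V for all y, z ∈ W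
    have hcont : Continuous fun p : K × K => x + (p.1 - p.2) := by continuity
    have h0 : (fun p : K × K => x + (p.1 - p.2)) (0, 0) = x := by simp
    have hmem : (fun p : K × K => x + (p.1 - p.2)) ⁻¹' V ∈ 𝓝 ((0 : K), (0 : K)) := by
      apply hcont.continuousAt.preimage_mem_nhds
      simpa using hVo.mem_nhds hxV
    rw [nhds_prod_eq, Filter.mem_prod_iff] at hmem
    obtain ⟨W₁, hW₁, W₂, hW₂, hW⟩ := hmem
    obtain ⟨l, hl, hlU⟩ := hUb (W₁ ∩ W₂) (Filter.inter_mem hW₁ hW₂)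
    refine ⟨(fun y => l * y + (x - l * u₀)) '' U, ⟨l, x - l * u₀, hl, rfl⟩,
      ⟨u₀, hu₀, by ring⟩, ?_⟩
    rintro y ⟨u, hu, rfl⟩
    have h1 := hlU u hu
    have h2 := hlU u₀ hu₀
    have : x + (l * u - l * u₀) ∈ V := hW (Set.mk_mem_prod h1.1 h2.2)
    convert this using 1
    ring
end

section
/- Let K be a field with a locally bounded Hausdorff field topology τ. Then τ has weight at most |K|, i.e., τ has a basis of cardinality at most the cardinality of K. -/
open TopologicalSpace Polynomial

variable {K : Type*}

theorem stmt11 [Field K] (τ : TopologicalSpace K) (hτ : IsFieldTopology τ)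
    (hlb : IsLocallyBoundedTop τ) :
    ∃ B : Set (Set K), @TopologicalSpace.IsTopologicalBasis K τ B ∧
      Cardinal.mk B ≤ Cardinal.mk K := by
  letI := τ
  obtain ⟨hT2, hring, hinv⟩ := hτ
  haveI := hT2; haveI := hring
  by_cases hfin : Finite K
  · -- finite case: discrete topology, singletons form a basis
    haveI : DiscreteTopology K := Finite.instDiscreteTopology
    refine ⟨Set.range (fun x : K => ({x} : Set K)), ?_, Cardinal.mk_range_le⟩
    apply isTopologicalBasis_of_isOpen_of_nhds
    · rintro s ⟨x, rfl⟩; exact isOpen_discrete _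
    · intro a u ha _
      exact ⟨{a}, ⟨a, rfl⟩, rfl, Set.singleton_subset_iff.2 ha⟩
  · haveI : Infinite K := not_finite_iff_infinite.mp hfin
    obtain ⟨X, hXopen, ⟨x₀, hx₀⟩, hXbdd⟩ := hlb
    set W : Set K := (fun y => y + x₀) ⁻¹' X with hWdef
    have hWopen : IsOpen W := hXopen.preimage (continuous_id.add continuous_const)
    have hW0 : (0 : K) ∈ W := by simpa [hWdef] using hx₀
    -- W is a bounded neighborhood of 0
    have hWbdd : ∀ U ∈ nhds (0 : K), ∃ l : K, l ≠ 0 ∧ ∀ w ∈ W, l * w ∈ U := by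
      intro U hU
      have hsub : Filter.Tendsto (fun p : K × K => p.1 - p.2)
          (nhds ((0 : K), (0 : K))) (nhds 0) := by
        have h := (continuous_fst.sub continuous_snd).tendsto ((0 : K), (0 : K))
        convert h using 2 <;> simp
      have hmem : (fun p : K × K => p.1 - p.2) ⁻¹' U ∈ nhds ((0 : K), (0 : K)) :=
        hsub hU
      rw [nhds_prod_eq, Filter.mem_prod_iff] at hmem
      obtain ⟨V₁, hV₁, V₂, hV₂, hV⟩ := hmem
      obtain ⟨l, hl, hlX⟩ := hXbdd (V₁ ∩ V₂) (Filter.inter_mem hV₁ hV₂)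
      refine ⟨l, hl, fun w hw => ?_⟩
      have h1 : l * (w + x₀) ∈ V₁ ∩ V₂ := hlX _ hw
      have h2 : l * x₀ ∈ V₁ ∩ V₂ := hlX _ hx₀
      have hpair : (l * (w + x₀), l * x₀) ∈ V₁ ×ˢ V₂ := ⟨h1.1, h2.2⟩
      have := hV hpair
      simpa [mul_add] using this
    refine ⟨(fun p : K × K => (fun y => p.1 + p.2 * y) '' W) '' {p : K × K | p.2 ≠ 0},
      ?_, ?_⟩
    · apply isTopologicalBasis_of_isOpen_of_nhds
      · rintro s ⟨⟨x, l⟩, hl, rfl⟩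
        simp only [Set.mem_setOf_eq] at hl
        have heq : (fun y => x + l * y) '' W = (fun y => l⁻¹ * (y - x)) ⁻¹' W := by
          ext y
          simp only [Set.mem_image, Set.mem_preimage]
          constructor
          · rintro ⟨w, hw, rfl⟩
            have : l⁻¹ * (x + l * w - x) = w := by
              field_simp
              ring
            rwa [this]
          · intro hy
            refine ⟨l⁻¹ * (y - x), hy, ?_⟩
            field_simp
            ring
        show IsOpen ((fun y => x + l * y) '' W)
        rw [heq]
        exact hWopen.preimage (continuous_const.mul (continuous_id.sub continuous_const))
      · intro a U haU hUopen
        have hUa : U ∈ nhds a := hUopen.mem_nhds haU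
        have htr : Filter.Tendsto (fun t : K => a + t) (nhds 0) (nhds a) := by
          have h := (continuous_const.add continuous_id (f := fun _ : K => a)).tendsto (0 : K)
          convert h using 2 <;> simp
        have hU0 : (fun t : K => a + t) ⁻¹' U ∈ nhds (0 : K) := htr hUa
        obtain ⟨l, hl, hlW⟩ := hWbdd _ hU0
        refine ⟨(fun y => a + l * y) '' W, ⟨(a, l), hl, rfl⟩, ⟨0, hW0, by simp⟩, ?_⟩
        rintro y ⟨w, hw, rfl⟩
        exact hlW w hw
    · calc Cardinal.mk _ ≤ Cardinal.mk {p : K × K | p.2 ≠ 0} := Cardinal.mk_image_le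
        _ ≤ Cardinal.mk (K × K) := Cardinal.mk_set_le _
        _ = Cardinal.mk K := by
            rw [Cardinal.mk_prod, Cardinal.lift_id]
            exact Cardinal.mul_eq_self (Cardinal.aleph0_le_mk K)
end

section
/- Let K be a field, F a subfield of K of characteristic zero, B a transcendence basis for K over F, d₀ : F → K a derivation, and g : B → K an arbitrary function. Then there is a unique derivation d : K → K extending d₀ and with d(b) = g(b) for all b ∈ B. -/
open TopologicalSpace Polynomial

variable {K : Type*}

namespace Stmt14Aux

noncomputable section
set_option synthInstance.maxHeartbeats 800000
set_option maxHeartbeats 1600000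
variable [Field K] [CharZero K]

/-- The coefficient ring hom `F → K[ε]`, `f ↦ (f, d₀ f)`. -/
def rho (F : Subfield K) (d₀ : Derivation ℤ F K) : F →+* TrivSqZeroExt K K where
  toFun f := ⟨(f : K), d₀ f⟩
  map_one' := by
    refine TrivSqZeroExt.ext ?_ ?_
    · simp [TrivSqZeroExt.fst_one]
    · simp [TrivSqZeroExt.snd_one]
  map_mul' a b := by
    refine TrivSqZeroExt.ext ?_ ?_
    · rfl
    · erw [TrivSqZeroExt.snd_mul]
      show (d₀ (a * b) : K) = _
      rw [Derivation.leibniz]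
      show (a • d₀ b : K) + b • d₀ a = (a:K) • (d₀ b) + (MulOpposite.op (b:K)) • (d₀ a)
      rw [op_smul_eq_smul]
      congr 1
  map_zero' := by
    refine TrivSqZeroExt.ext ?_ ?_ <;> simp
  map_add' a b := by
    refine TrivSqZeroExt.ext ?_ ?_
    · rfl
    · exact map_add d₀ a b

@[simp] lemma fst_rho (F : Subfield K) (d₀ : Derivation ℤ F K) (f : F) :
    (rho F d₀ f).fst = (f : K) := rfl

@[simp] lemma snd_rho (F : Subfield K) (d₀ : Derivation ℤ F K) (f : F) :
    (rho F d₀ f).snd = d₀ f := rfl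

variable (F : Subfield K) (B : Set K) (d₀ : Derivation ℤ F K) (g : B → K)

/-- Evaluation of polynomials into the dual numbers. -/
def phi : MvPolynomial B F →+* TrivSqZeroExt K K :=
  MvPolynomial.eval₂Hom (rho F d₀) (fun b => ⟨(b : K), g b⟩)

lemma fst_phi (p : MvPolynomial B F) :
    (phi F B d₀ g p).fst = MvPolynomial.aeval (Subtype.val : B → K) p := by
  have : (TrivSqZeroExt.fstHom K K K).toRingHom.comp (phi F B d₀ g)
      = MvPolynomial.eval₂Hom (algebraMap F K) (Subtype.val : B → K) := by
    erw [phi, MvPolynomial.comp_eval₂Hom]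
    rfl
  have h := congrArg (fun f => f p) this
  simpa [MvPolynomial.aeval_def] using h

/-- `K` is algebraic over the intermediate field generated by a transcendence basis. -/
lemma isAlg (hB : IsTranscendenceBasis F (Subtype.val : B → K)) :
    Algebra.IsAlgebraic (IntermediateField.adjoin F (Set.range (Subtype.val : B → K))) K := by
  set L := IntermediateField.adjoin F (Set.range (Subtype.val : B → K))
  set A' := Algebra.adjoin F (Set.range (Subtype.val : B → K)) with hA'
  haveI halg : Algebra.IsAlgebraic A' K := hB.isAlgebraic
  have hle : A' ≤ L.toSubalgebra := IntermediateField.algebra_adjoin_le_adjoin F _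
  letI : Algebra A' L := RingHom.toAlgebra
    { toFun := fun x => ⟨x.1, hle x.2⟩
      map_one' := rfl
      map_mul' := fun _ _ => rfl
      map_zero' := rfl
      map_add' := fun _ _ => rfl }
  letI : IsScalarTower A' L K := IsScalarTower.of_algebraMap_eq' rfl
  exact Algebra.IsAlgebraic.extendScalars
    (R := A') (S := L) (fun x y h => by
      apply Subtype.ext
      have h2 := congrArg Subtype.val h
      exact h2)

lemma charZeroL (L : IntermediateField F K) : CharZero L := by
  refine ⟨fun m n h => ?_⟩
  have h2 : (m : K) = (n : K) := by
    have := congrArg (algebraMap L K) h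
    simpa using this
  exact_mod_cast h2


lemma unique_aux (F : Subfield K) (B : Set K)
    (hB : IsTranscendenceBasis F (Subtype.val : B → K))
    (d d' : Derivation ℤ K K) (hF : ∀ a : F, d (a : K) = d' (a : K))
    (hBv : ∀ b : B, d (b : K) = d' (b : K)) : d = d' := by
  set L : IntermediateField F K := IntermediateField.adjoin F (Set.range (Subtype.val : B → K))
    with hLdef
  -- d and d' agree on L
  have hclos : ∀ x ∈ Subfield.closure
      (Set.range (algebraMap F K) ∪ Set.range (Subtype.val : B → K)), d x = d' x := by
    intro x hx
    induction hx using Subfield.closure_induction with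
    | mem x hx =>
      rcases hx with ⟨a, rfl⟩ | ⟨b, rfl⟩
      · exact hF a
      · exact hBv b
    | one => simp
    | add x y hx hy ihx ihy => rw [map_add, map_add, ihx, ihy]
    | neg x hx ihx => rw [map_neg, map_neg, ihx]
    | inv x hx ihx => rw [Derivation.leibniz_inv, Derivation.leibniz_inv, ihx]
    | mul x y hx hy ihx ihy => rw [Derivation.leibniz, Derivation.leibniz, ihx, ihy]
  have hLagree : ∀ x ∈ L, d x = d' x := fun x hx => hclos x hx
  -- the difference as a derivation over L
  haveI : Algebra.IsAlgebraic L K := isAlg F B hB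
  haveI : CharZero L := charZeroL F L
  haveI : Algebra.FormallyUnramified L K := Algebra.FormallyUnramified.of_isSeparable L K
  let e : Derivation ℤ K K := d - d'
  have he : ∀ x : K, x ∈ L → e x = 0 := by
    intro x hx
    show d x - d' x = 0
    rw [hLagree x hx, sub_self]
  let eL : Derivation L K K :=
    { toFun := fun x => e x
      map_add' := fun a b => by simp
      map_smul' := fun l x => by
        simp only [RingHom.id_apply]
        rw [Algebra.smul_def, Algebra.smul_def]
        rw [Derivation.leibniz, he (algebraMap L K l) l.2]
        simp [smul_eq_mul]
      map_one_eq_zero' := by simp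
      leibniz' := fun a b => by simp [Derivation.leibniz] }
  have : ∀ x : K, eL x = 0 := by
    intro x
    have h1 : eL.liftKaehlerDifferential ((KaehlerDifferential.D L K) x) = eL x :=
      Derivation.liftKaehlerDifferential_comp_D eL x
    rw [Subsingleton.elim ((KaehlerDifferential.D L K) x) 0, map_zero] at h1
    exact h1.symm
  ext x
  have h3 := this x
  change d x - d' x = 0 at h3
  exact sub_eq_zero.mp h3

lemma exists_derivation (hB : IsTranscendenceBasis F (Subtype.val : B → K)) :
    ∃ d : Derivation ℤ K K, (∀ a : F, d (a : K) = d₀ a) ∧ ∀ b : B, d (b : K) = g b := by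
  classical
  set L : IntermediateField F K := IntermediateField.adjoin F (Set.range (Subtype.val : B → K))
    with hLdef
  haveI : Algebra.IsAlgebraic L K := isAlg F B hB
  haveI : CharZero L := charZeroL F L
  haveI hets : Algebra.FormallyEtale L K := Algebra.FormallyEtale.of_isSeparable L K
  haveI hsm : Algebra.FormallySmooth L K := inferInstance
  -- the map from the rational function field
  let Frac := FractionRing (MvPolynomial B F)
  have hinj : Function.Injective
      (MvPolynomial.aeval (Subtype.val : B → K) : MvPolynomial B F →ₐ[F] K) :=
    algebraicIndependent_iff_injective_aeval.1 hB.1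
  have hunit : ∀ y : nonZeroDivisors (MvPolynomial B F), IsUnit (phi F B d₀ g y) := by
    rintro ⟨y, hy⟩
    rw [TrivSqZeroExt.isUnit_iff_isUnit_fst, fst_phi, isUnit_iff_ne_zero]
    intro h0
    have : y = 0 := by
      apply hinj
      simpa using h0
    exact mem_nonZeroDivisors_iff_ne_zero.1 hy this
  let lift0 : Frac →+* TrivSqZeroExt K K := IsLocalization.lift hunit
  let eqv := hB.1.aevalEquivField
  let ψ : L →+* TrivSqZeroExt K K := lift0.comp (eqv.symm.toAlgHom.toRingHom)
  -- first component of ψ is the inclusion L → K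
  have key : (TrivSqZeroExt.fstHom K K K).toRingHom.comp lift0
      = (algebraMap L K).comp eqv.toAlgHom.toRingHom := by
    apply IsLocalization.ringHom_ext (nonZeroDivisors (MvPolynomial B F))
    refine RingHom.ext fun p => ?_
    simp only [RingHom.comp_apply]
    have h1 : lift0 (algebraMap (MvPolynomial B F) Frac p) = phi F B d₀ g p :=
      IsLocalization.lift_eq hunit p
    show (lift0 (algebraMap (MvPolynomial B F) Frac p)).fst
        = algebraMap L K (eqv (algebraMap (MvPolynomial B F) Frac p))
    rw [h1, fst_phi]
    exact (hB.1.aevalEquivField_algebraMap_apply_coe p).symm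
  have hfst : ∀ z : L, (ψ z).fst = (z : K) := by
    intro z
    have := congrArg (fun f => f (eqv.symm z)) key
    simp only [RingHom.comp_apply] at this
    have h2 : eqv (eqv.symm z) = z := eqv.apply_symm_apply z
    calc (ψ z).fst = algebraMap L K (eqv (eqv.symm z)) := this
      _ = (z : K) := by rw [h2]; rfl
  -- values of ψ
  have hψF : ∀ a : F, ψ (algebraMap F L a) = rho F d₀ a := by
    intro a
    show lift0 (eqv.symm (algebraMap F L a)) = _
    have h1 : eqv.symm (algebraMap F L a) = algebraMap F Frac a := eqv.symm.commutes a
    rw [h1, IsScalarTower.algebraMap_apply F (MvPolynomial B F) Frac a]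
    have h2 : lift0 (algebraMap (MvPolynomial B F) Frac (algebraMap F (MvPolynomial B F) a))
        = phi F B d₀ g (algebraMap F (MvPolynomial B F) a) := IsLocalization.lift_eq hunit _
    rw [h2, MvPolynomial.algebraMap_eq]
    rw [phi]; exact MvPolynomial.eval₂Hom_C _ _ _
  have hmem : ∀ b : B, (b : K) ∈ L := fun b =>
    IntermediateField.subset_adjoin F _ ⟨b, rfl⟩
  have hψB : ∀ b : B, ψ (⟨(b : K), hmem b⟩ : L) = ⟨(b : K), g b⟩ := by
    intro b
    have hb : (⟨(b : K), hmem b⟩ : L) = eqv (algebraMap (MvPolynomial B F) Frac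
        (MvPolynomial.X b)) := by
      apply Subtype.ext
      rw [hB.1.aevalEquivField_algebraMap_apply_coe]
      simp
    show lift0 (eqv.symm _) = _
    rw [hb, eqv.symm_apply_apply, IsLocalization.lift_eq hunit]
    rw [phi]; exact MvPolynomial.eval₂Hom_X' _ _ _
  -- set up the algebra structure on K[ε] over L via ψ and lift
  letI algL : Algebra L (TrivSqZeroExt K K) := ψ.toAlgebra
  let g' : TrivSqZeroExt K K →ₐ[L] K :=
    { toRingHom := (TrivSqZeroExt.fstHom K K K).toRingHom
      commutes' := fun l => hfst l }
  have hg'surj : Function.Surjective g' := fun x => ⟨TrivSqZeroExt.inl x, rfl⟩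
  have hker : IsNilpotent (RingHom.ker (g' : TrivSqZeroExt K K →+* K)) := by
    refine ⟨2, ?_⟩
    have h2 : RingHom.ker (g' : TrivSqZeroExt K K →+* K) * RingHom.ker (g' : TrivSqZeroExt K K →+* K) ≤ ⊥ := by
      refine Ideal.mul_le.2 fun a ha b hb => ?_
      have ha' : a.fst = 0 := ha
      have hb' : b.fst = 0 := hb
      rw [Ideal.mem_bot]
      refine TrivSqZeroExt.ext ?_ ?_
      · rw [TrivSqZeroExt.fst_mul, ha', zero_mul, TrivSqZeroExt.fst_zero]
      · rw [TrivSqZeroExt.snd_mul, ha', hb', TrivSqZeroExt.snd_zero]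
        simp
    rw [Ideal.zero_eq_bot, eq_bot_iff]
    calc RingHom.ker (g' : TrivSqZeroExt K K →+* K) ^ 2
        = RingHom.ker (g' : TrivSqZeroExt K K →+* K) * RingHom.ker (g' : TrivSqZeroExt K K →+* K) := sq _
      _ ≤ ⊥ := h2
  let Φ : K →ₐ[L] TrivSqZeroExt K K :=
    Algebra.FormallySmooth.liftOfSurjective (AlgHom.id L K) g' hg'surj hker
  have hΦfst : ∀ x : K, (Φ x).fst = x := fun x =>
    Algebra.FormallySmooth.liftOfSurjective_apply (AlgHom.id L K) g' hg'surj hker x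
  have hΦL : ∀ l : L, Φ (l : K) = ψ l := fun l => Φ.commutes l
  -- the derivation
  let dlin : K →ₗ[ℤ] K :=
    ((TrivSqZeroExt.sndHom K K).toAddMonoidHom.comp Φ.toRingHom.toAddMonoidHom).toIntLinearMap
  let d : Derivation ℤ K K :=
    { toLinearMap := dlin
      map_one_eq_zero' := by
        show (Φ 1).snd = 0
        rw [map_one, TrivSqZeroExt.snd_one]
      leibniz' := fun a b => by
        show (Φ (a * b)).snd = a • (Φ b).snd + b • (Φ a).snd
        rw [map_mul, TrivSqZeroExt.snd_mul, hΦfst, hΦfst, op_smul_eq_smul] }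
  refine ⟨d, fun a => ?_, fun b => ?_⟩
  · show (Φ (a : K)).snd = d₀ a
    have : ((algebraMap F L a : L) : K) = (a : K) := rfl
    rw [← this, hΦL, hψF]
    simp
  · show (Φ (b : K)).snd = g b
    have : ((⟨(b : K), hmem b⟩ : L) : K) = (b : K) := rfl
    rw [← this, hΦL, hψB]
    rfl
end
end Stmt14Aux

theorem stmt14 [Field K] [CharZero K] (F : Subfield K) (B : Set K)
    (hB : IsTranscendenceBasis F (Subtype.val : B → K))
    (d₀ : Derivation ℤ F K) (g : B → K) :
    ∃! d : Derivation ℤ K K, (∀ a : F, d (a : K) = d₀ a) ∧ ∀ b : B, d (b : K) = g b := by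
  obtain ⟨d, h1, h2⟩ := Stmt14Aux.exists_derivation F B d₀ g hB
  refine ⟨d, ⟨h1, h2⟩, fun d' hd' => ?_⟩
  exact Stmt14Aux.unique_aux F B hB d' d
    (fun a => by rw [hd'.1 a, h1 a]) (fun b => by rw [hd'.2 b, h2 b])
end

section
/- Let K be a field of characteristic zero and infinite transcendence degree, with a Hausdorff field topology τ of weight at most κ = |K|, such that there exist disjoint τ-dense algebraically independent sets of size κ. Then there exists a K-linearly independent family D of 2^κ derivations K → K such that the intersection of the constant subfields of the members of D is τ-dense in K. -/
open TopologicalSpace Polynomial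

variable {K : Type*}

section Aux

open Cardinal TrivSqZeroExt Set IntermediateField

variable [Field K] [CharZero K]

lemma aux_algInd_rat {ι : Type*} {x : ι → K} (h : AlgebraicIndependent ℤ x) :
    AlgebraicIndependent ℚ x := by
  classical
  rw [algebraicIndependent_iff]
  intro p hp
  letI : Algebra (MvPolynomial ι ℤ) (MvPolynomial ι ℚ) := MvPolynomial.algebraMvPolynomial
  haveI : IsLocalization ((nonZeroDivisors ℤ).map (MvPolynomial.C (σ := ι)))
      (MvPolynomial ι ℚ) := MvPolynomial.isLocalization _ _
  obtain ⟨⟨q, m⟩, hq⟩ := IsLocalization.mk'_surjective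
    ((nonZeroDivisors ℤ).map (MvPolynomial.C (σ := ι))) p
  have hspec : p * algebraMap (MvPolynomial ι ℤ) (MvPolynomial ι ℚ) (m : MvPolynomial ι ℤ)
      = algebraMap (MvPolynomial ι ℤ) (MvPolynomial ι ℚ) q := by
    rw [← hq]; exact IsLocalization.mk'_spec _ q m
  have halg : ∀ r : MvPolynomial ι ℤ,
      MvPolynomial.aeval x (algebraMap (MvPolynomial ι ℤ) (MvPolynomial ι ℚ) r)
        = MvPolynomial.aeval x r := by
    intro r
    rw [MvPolynomial.algebraMap_def, MvPolynomial.aeval_map_algebraMap]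
  have hq0 : MvPolynomial.aeval x q = 0 := by
    rw [← halg, ← hspec, map_mul, hp, zero_mul]
  have : q = 0 := algebraicIndependent_iff.1 h q hq0
  rw [this, map_zero] at hspec
  have hu := IsLocalization.map_units (MvPolynomial ι ℚ) m
  exact (hu.mul_left_eq_zero).1 hspec

set_option maxHeartbeats 1000000 in
lemma aux_exists_derivation {S : Set K} (hS : IsTranscendenceBasis ℚ ((↑) : S → K))
    (f : S → K) : ∃ d : Derivation ℤ K K, ∀ i : S, d (i : K) = f i := by
  classical
  letI : Algebra ℚ (FractionRing (MvPolynomial S ℚ)) := OreLocalization.instAlgebra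
  have hx : AlgebraicIndependent ℚ ((↑) : S → K) := hS.1
  set F : IntermediateField ℚ K := IntermediateField.adjoin ℚ (Set.range ((↑) : S → K)) with hF
  haveI : Algebra.IsAlgebraic F K := hS.isAlgebraic_field
  haveI : CharZero F := charZero_of_injective_algebraMap (algebraMap ℚ F).injective
  haveI : Algebra.FormallyEtale F K := Algebra.FormallyEtale.of_isSeparable F K
  -- the square-zero extension K[ε]
  let ψ : MvPolynomial S ℚ →ₐ[ℚ] TrivSqZeroExt K K :=
    MvPolynomial.aeval (fun i : S => inl (i : K) + inr (f i))
  have hfstψ : ∀ p : MvPolynomial S ℚ,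
      fst (ψ p) = MvPolynomial.aeval ((↑) : S → K) p := by
    intro p
    have h1 : (TrivSqZeroExt.fstHom ℚ K K).comp ψ = MvPolynomial.aeval ((↑) : S → K) := by
      apply MvPolynomial.algHom_ext
      intro i
      simp [ψ]
    exact DFunLike.congr_fun h1 p
  have hunits : ∀ y : nonZeroDivisors (MvPolynomial S ℚ), IsUnit (ψ y) := by
    intro y
    rw [isUnit_iff_isUnit_fst, hfstψ, isUnit_iff_ne_zero]
    intro h0
    exact nonZeroDivisors.coe_ne_zero y (algebraicIndependent_iff.1 hx _ h0)
  let φ' : FractionRing (MvPolynomial S ℚ) →+* TrivSqZeroExt K K :=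
    IsLocalization.lift (M := nonZeroDivisors (MvPolynomial S ℚ)) hunits
  let e := hx.aevalEquivField
  let φ : F →+* TrivSqZeroExt K K := φ'.comp e.symm.toRingEquiv.toRingHom
  -- P1 : first component of φ is the inclusion
  have key : (TrivSqZeroExt.fstHom ℚ K K).toRingHom.comp φ' =
      IsFractionRing.lift (algebraicIndependent_iff_injective_aeval.2 hx) := by
    apply IsLocalization.ringHom_ext (nonZeroDivisors (MvPolynomial S ℚ))
    refine RingHom.ext fun p => ?_
    show fst (φ' (algebraMap _ _ p)) = _
    rw [IsLocalization.lift_eq, RingHom.comp_apply]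
    exact (hfstψ p).trans (IsFractionRing.lift_algebraMap _ p).symm
  have hP1 : ∀ a : F, fst (φ a) = (a : K) := by
    intro a
    have h2 : fst (φ' (e.symm a)) =
        IsFractionRing.lift (algebraicIndependent_iff_injective_aeval.2 hx) (e.symm a) :=
      DFunLike.congr_fun key (e.symm a)
    have h3 : (hx.aevalEquivField (e.symm a) : K) =
        IsFractionRing.lift (algebraicIndependent_iff_injective_aeval.2 hx) (e.symm a) :=
      hx.aevalEquivField_apply_coe (e.symm a)
    show fst (φ' (e.symm a)) = (a : K)
    rw [h2, ← h3]
    congr 1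
    exact e.apply_symm_apply a
  -- P2 : values of φ on the elements of S
  have hP2 : ∀ i : S, φ ⟨(i : K), subset_adjoin ℚ _ (mem_range_self i)⟩
      = inl (i : K) + inr (f i) := by
    intro i
    have h4 : e.symm ⟨(i : K), subset_adjoin ℚ _ (mem_range_self i)⟩ =
        algebraMap (MvPolynomial S ℚ) (FractionRing (MvPolynomial S ℚ)) (MvPolynomial.X i) := by
      apply e.injective
      rw [e.apply_symm_apply]
      apply Subtype.ext
      rw [show (e (algebraMap (MvPolynomial S ℚ) (FractionRing (MvPolynomial S ℚ))
        (MvPolynomial.X i)) : K) = _ from hx.aevalEquivField_algebraMap_apply_coe (MvPolynomial.X i)]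
      simp
    show φ' (e.symm _) = _
    rw [h4]
    show φ' (algebraMap _ _ (MvPolynomial.X i)) = _
    rw [IsLocalization.lift_eq]
    simp [ψ]
  -- set up the square-zero extension as an F-algebra via φ
  letI : Algebra F (TrivSqZeroExt K K) := φ.toAlgebra
  let I : Ideal (TrivSqZeroExt K K) := RingHom.ker (TrivSqZeroExt.fstHom ℚ K K).toRingHom
  have hmemI : ∀ z : TrivSqZeroExt K K, z ∈ I ↔ fst z = 0 := fun z => Iff.rfl
  have hI : I ^ 2 = ⊥ := by
    rw [pow_two, eq_bot_iff]
    refine Ideal.mul_le.mpr fun a ha b hb => ?_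
    have hab : a * b = 0 := by
      have ha0 : fst a = 0 := (hmemI a).1 ha
      have hb0 : fst b = 0 := (hmemI b).1 hb
      ext
      · rw [fst_mul, ha0, zero_mul, fst_zero]
      · rw [snd_mul, ha0, hb0, snd_zero]
        simp
    rw [hab]
    exact Ideal.zero_mem ⊥
  letI : Algebra F ((TrivSqZeroExt K K) ⧸ I) := Ideal.Quotient.algebra F
  have halgFB : ∀ r : F, algebraMap F (TrivSqZeroExt K K) r = φ r := fun _ => rfl
  obtain ⟨σ, hσ⟩ := (Algebra.FormallyEtale.comp_bijective (R := F) (A := K) I hI).2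
    { toRingHom := (Ideal.Quotient.mk I).comp (TrivSqZeroExt.inlHom K K)
      commutes' := by
        intro r
        show (Ideal.Quotient.mk I) (inl (algebraMap F K r) : TrivSqZeroExt K K)
            = algebraMap F ((TrivSqZeroExt K K) ⧸ I) r
        have h5 : algebraMap F ((TrivSqZeroExt K K) ⧸ I) r
            = Ideal.Quotient.mk I (φ r) := rfl
        rw [h5, Ideal.Quotient.eq, hmemI, fst_sub, fst_inl]
        show (r : K) - fst (φ r) = 0
        rw [hP1 r, sub_self] }
  have hfst : ∀ a : K, fst (σ a) = a := by
    intro a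
    have h7 : Ideal.Quotient.mk I (σ a) = Ideal.Quotient.mk I (inl a) := by
      exact DFunLike.congr_fun hσ a
    rw [Ideal.Quotient.eq, hmemI, fst_sub, fst_inl] at h7
    exact sub_eq_zero.1 h7
  let d : Derivation ℤ K K :=
    { toLinearMap := ((TrivSqZeroExt.sndHom K K).toAddMonoidHom.comp
        σ.toRingHom.toAddMonoidHom).toIntLinearMap
      map_one_eq_zero' := by
        show snd (σ 1) = 0
        rw [map_one]
        exact snd_one
      leibniz' := by
        intro a b
        show snd (σ (a * b)) = a • snd (σ b) + b • snd (σ a)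
        rw [map_mul, snd_mul, hfst, hfst, op_smul_eq_smul] }
  refine ⟨d, fun i => ?_⟩
  show snd (σ (i : K)) = f i
  have h8 : (i : K) = algebraMap F K ⟨(i : K), subset_adjoin ℚ _ (mem_range_self i)⟩ := rfl
  rw [h8, σ.commutes, halgFB, hP2 i]
  simp


end Aux

open Cardinal Set

theorem stmt16 [Field K] [CharZero K] (τ : TopologicalSpace K) (hτ : IsFieldTopology τ)
    (hw : ∃ Bas : Set (Set K), @TopologicalSpace.IsTopologicalBasis K τ Bas ∧
      Cardinal.mk Bas ≤ Cardinal.mk K)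
    (htr : ∃ s : Set K, s.Infinite ∧ AlgebraicIndependent ℤ (Subtype.val : s → K))
    (hBB : ∃ B B' : Set K, Disjoint B B' ∧ @Dense K τ B ∧ @Dense K τ B' ∧
      AlgebraicIndependent ℤ (Subtype.val : ↑(B ∪ B') → K) ∧
      Cardinal.mk B = Cardinal.mk K ∧ Cardinal.mk B' = Cardinal.mk K) :
    ∃ D : Set (Derivation ℤ K K), Cardinal.mk D = 2 ^ Cardinal.mk K ∧
      LinearIndependent K (fun d : D => ⇑(d : Derivation ℤ K K)) ∧
      @Dense K τ {a : K | ∀ d ∈ D, d a = 0} := by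
  classical
  obtain ⟨B, B', hdisj, hdB, hdB', hai, hcB, hcB'⟩ := hBB
  have haiQ : AlgebraicIndependent ℚ ((↑) : ↑(B ∪ B') → K) := aux_algInd_rat hai
  obtain ⟨S, hsub, hmax⟩ := exists_maximal_algebraicIndependent (B ∪ B') Set.univ
    (Set.subset_univ _) haiQ
  have hTB : IsTranscendenceBasis ℚ ((↑) : S → K) := by
    refine ⟨hmax.1.1, fun s hs hle => ?_⟩
    rw [Subtype.range_coe] at hle ⊢
    exact le_antisymm hle (hmax.2 ⟨hs, Set.subset_univ _⟩ hle)
  -- the submodule of derivations vanishing on B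
  let W : Submodule K (Derivation ℤ K K) :=
    { carrier := {d | ∀ x ∈ B, d x = 0}
      add_mem' := fun {a b} ha hb x hx => by
        show a x + b x = 0
        rw [ha x hx, hb x hx, add_zero]
      zero_mem' := fun x hx => rfl
      smul_mem' := fun c d hd x hx => by
        show c • d x = 0
        rw [hd x hx, smul_zero] }
  -- the coercion to functions, as a linear map
  let Fc : Derivation ℤ K K →ₗ[K] (K → K) :=
    { toFun := fun d => ⇑d
      map_add' := fun a b => rfl
      map_smul' := fun c a => rfl }
  have hFcinj : Function.Injective Fc := fun a b h => DFunLike.coe_injective h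
  -- restriction to B' as a linear map on W
  let π : W →ₗ[K] (↥B' → K) :=
    { toFun := fun d => fun b => (d : Derivation ℤ K K) (b : K)
      map_add' := fun a b => rfl
      map_smul' := fun c a => rfl }
  have hπsurj : Function.Surjective π := by
    intro f
    set fS : S → K := fun s => if h : (s : K) ∈ B' then f ⟨s, h⟩ else 0 with hfS
    obtain ⟨d, hd⟩ := aux_exists_derivation hTB fS
    have hdW : d ∈ W := by
      intro x hx
      have hxS : x ∈ S := hsub (Set.mem_union_left _ hx)
      have := hd ⟨x, hxS⟩
      rw [hfS] at this
      simpa [Set.disjoint_left.1 hdisj hx] using this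
    refine ⟨⟨d, hdW⟩, ?_⟩
    funext b
    have hbS : (b : K) ∈ S := hsub (Set.mem_union_right _ b.2)
    have := hd ⟨(b : K), hbS⟩
    rw [hfS] at this
    show d (b : K) = f b
    simpa [b.2] using this
  -- cardinal computations
  have hκ : ℵ₀ ≤ #K := Cardinal.aleph0_le_mk K
  have harrow : #(K → K) = 2 ^ #K := by
    rw [← Cardinal.power_def, Cardinal.power_self_eq hκ]
  haveI : Infinite ↥B' := by
    rw [Cardinal.infinite_iff, hcB']
    exact hκ
  have hrankfun : Module.rank K (↥B' → K) = 2 ^ #K := by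
    rw [rank_fun_infinite, ← Cardinal.power_def, hcB', Cardinal.power_self_eq hκ]
  have hge : 2 ^ #K ≤ Module.rank K W := hrankfun ▸ π.rank_le_of_surjective hπsurj
  let b := Module.Basis.ofVectorSpace K W
  have hle : Module.rank K W ≤ 2 ^ #K := by
    rw [← b.mk_eq_rank'']
    calc #(Module.Basis.ofVectorSpaceIndex K W) ≤ #W := Cardinal.mk_le_of_injective Subtype.val_injective
      _ ≤ #(Derivation ℤ K K) := Cardinal.mk_le_of_injective Subtype.val_injective
      _ ≤ #(K → K) := Cardinal.mk_le_of_injective (DFunLike.coe_injective)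
      _ = 2 ^ #K := harrow
  have hrankW : Module.rank K W = 2 ^ #K := le_antisymm hle hge
  have hmkι : #(Module.Basis.ofVectorSpaceIndex K W) = 2 ^ #K := by rw [b.mk_eq_rank'']; exact hrankW
  let g : Module.Basis.ofVectorSpaceIndex K W → Derivation ℤ K K := fun i => (b i : Derivation ℤ K K)
  have hginj : Function.Injective g := Subtype.val_injective.comp b.injective
  refine ⟨Set.range g, ?_, ?_, ?_⟩
  · rw [Cardinal.mk_range_eq _ hginj, hmkι]
  · have li1 : LinearIndependent K (⇑(Fc.comp W.subtype) ∘ ⇑b) :=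
      b.linearIndependent.map' (Fc.comp W.subtype)
        (LinearMap.ker_eq_bot.2 (hFcinj.comp Subtype.val_injective))
    let eq1 := Equiv.ofInjective g hginj
    have li2 := li1.comp eq1.symm eq1.symm.injective
    have hfun : ((⇑(Fc.comp W.subtype) ∘ ⇑b) ∘ eq1.symm)
        = fun d : Set.range g => ⇑((d : Derivation ℤ K K)) := by
      funext dd
      show Fc (g (eq1.symm dd)) = _
      rw [Equiv.apply_ofInjective_symm hginj dd]
      rfl
    rwa [hfun] at li2
  · have hsub2 : B ⊆ {a : K | ∀ d ∈ Set.range g, d a = 0} := by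
      intro x hx
      rintro d ⟨i, rfl⟩
      exact (b i).2 x hx
    exact hdB.mono hsub2
end
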